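/- arXiv:1702.04308 — 2 statements merged into one kernel-verified Lean document; each statement's English description precedes it below -/
import Mathlib

section
/- (Wold decomposition, uniqueness.) Let G = (V, E, s, r) be a countable directed graph and V_r = {v ∈ V : r⁻¹(v) ≠ ∅}. Suppose a TCK family (Q, T) for G on H is unitarily equivalent both to the direct sum family ⊕_{v ∈ V_r} (P^v, S^v)^{(α_v)} ⊕ (R, L) and to ⊕_{v ∈ V_r} (P^v, S^v)^{(α'_v)} ⊕ (R', L'), where for each v ∈ V_r, α_v and α'_v are cardinal multiplicities, (P^v, S^v) is the model TCK family on H_{G,v}, and (R, L), (R', L') are full CK families for G. Then α_v = α'_v for every v ∈ V_r, and (R, L) is unitarily equivalent to (R', L'). -/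
noncomputable section

open scoped ENNReal InnerProductSpace ComplexOrder
open ContinuousLinearMap

attribute [local instance] Classical.propDecidable

namespace GraphPaper

/-! ### Positivity of operators (without completeness assumptions) -/

/-- A bounded operator on a complex inner product space is positive if all the
inner products `⟪T x, x⟫` are nonnegative (this forces them to be real). -/
def IsPosOp {W : Type*} [NormedAddCommGroup W] [InnerProductSpace ℂ W]
    (T : W →L[ℂ] W) : Prop :=
  ∀ x : W, 0 ≤ (inner ℂ (T x) x : ℂ)

/-! ### Toeplitz-Cuntz-Krieger families -/

variable {V E : Type*}

variable {H : Type*} [NormedAddCommGroup H] [InnerProductSpace ℂ H] [CompleteSpace H]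

/-- The Toeplitz-Cuntz-Krieger relations for a family of projections `P` indexed by
vertices and partial isometries `S` indexed by edges. -/
def IsTCK (s r : E → V) (P : V → H →L[ℂ] H) (S : E → H →L[ℂ] H) : Prop :=
  (∀ v, adjoint (P v) = P v) ∧
  (∀ v, P v ∘L P v = P v) ∧
  (∀ v w, v ≠ w → P v ∘L P w = 0) ∧
  (∀ e, adjoint (S e) ∘L S e = P (s e)) ∧
  (∀ (v : V) (F : Finset E), (∀ e ∈ F, r e = v) →
    IsPosOp (P v - ∑ e ∈ F, S e ∘L adjoint (S e)))

/-- A TCK family is a full Cuntz-Krieger family if for every vertex `v` receiving at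
least one edge, the (unconditionally convergent) sum `∑_{r(e) = v} S_e S_e* x` is `P_v x`. -/
def IsFullCK (s r : E → V) (P : V → H →L[ℂ] H) (S : E → H →L[ℂ] H) : Prop :=
  ∀ v : V, (∃ e, r e = v) → ∀ x : H,
    HasSum (fun e : {e : E // r e = v} => S e.1 (adjoint (S e.1) x)) (P v x)

/-- A TCK family is a Cuntz-Krieger family if `∑_{r(e) = v} S_e S_e* = P_v` for every
vertex `v` receiving finitely many and at least one edge. -/
def IsCK (s r : E → V) (P : V → H →L[ℂ] H) (S : E → H →L[ℂ] H) : Prop :=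
  IsTCK s r P S ∧
  ∀ (v : V) (hfin : {e : E | r e = v}.Finite), hfin.toFinset.Nonempty →
    ∑ e ∈ hfin.toFinset, S e ∘L adjoint (S e) = P v

/-- The generators of a TCK family, indexed by vertices and edges. -/
def gen (P : V → H →L[ℂ] H) (S : E → H →L[ℂ] H) : V ⊕ E → H →L[ℂ] H :=
  Sum.elim P S

variable {K : Type*} [NormedAddCommGroup K] [InnerProductSpace ℂ K] [CompleteSpace K]

/-- `(Q, T)` on `K` dilates `(P, S)` on `H` via the isometry `W : H → K`:
compressions of arbitrary nonempty words in the generators agree. -/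
def Dilates (P : V → H →L[ℂ] H) (S : E → H →L[ℂ] H)
    (Q : V → K →L[ℂ] K) (T : E → K →L[ℂ] K) (W : H →L[ℂ] K) : Prop :=
  (∀ x : H, ‖W x‖ = ‖x‖) ∧
  ∀ l : List (V ⊕ E), l ≠ [] →
    adjoint W ∘L (l.map (gen Q T)).prod ∘L W = (l.map (gen P S)).prod

/-! ### Finite paths -/

/-- A finite path `λ = e_n ⋯ e_1` in the directed graph determined by the source and
range maps `s r : E → V`, together with a base vertex `src` which is the source of the
path.  The edges are listed as `[e_n, …, e_1]`, with the consecutive compatibility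
`s (e_{i+1}) = r (e_i)`, and (when the path is nonempty) `s (e_1) = src`.
A path with no edges is the length-zero path at the vertex `src`. -/
structure GPath (s r : E → V) : Type _ where
  src : V
  edges : List E
  chain : edges.Chain' fun e f => s e = r f
  src_eq : ∀ e ∈ edges.getLast?, s e = src

variable {s r : E → V}

/-- The range of a finite path. -/
def GPath.rng (p : GPath s r) : V := ((p.edges.head?).map r).getD p.src

theorem GPath.ext' {p q : GPath s r} (h1 : p.src = q.src) (h2 : p.edges = q.edges) :
    p = q := by
  cases p; cases q; simp_all

/-- The length-zero path at a vertex. -/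
def GPath.nil (s r : E → V) (v : V) : GPath s r where
  src := v
  edges := []
  chain := List.IsChain.nil
  src_eq := by simp

/-- The tail of a path (removing the first, i.e. last-applied, edge). -/
def GPath.tail (p : GPath s r) : GPath s r where
  src := p.src
  edges := p.edges.tail
  chain := p.chain.tail
  src_eq := by
    intro f hf
    apply p.src_eq
    rcases hp : p.edges with - | ⟨a, t⟩
    · rw [hp] at hf; simp at hf
    · rw [hp] at hf
      rcases t with - | ⟨b, t'⟩
      · simp at hf
      · simpa [List.getLast?_cons_cons] using hf

/-- The operator `T_λ = T_{e_n} ⋯ T_{e_1}` associated to a finite path `λ`;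
for the length-zero path at `v` it is `P_v`. -/
def pathOp (P : V → H →L[ℂ] H) (S : E → H →L[ℂ] H) (p : GPath s r) : H →L[ℂ] H :=
  if p.edges.isEmpty then P p.src else (p.edges.map S).prod

/-- Paths with source `v`. -/
abbrev SPath (s r : E → V) (v : V) : Type _ := {p : GPath s r // p.src = v}

/-! ### The model space and the model TCK family -/

/-- The model Hilbert space `H_{G,v} = ℓ²` of the set of paths with source `v`. -/
abbrev HGv (s r : E → V) (v : V) : Type _ := lp (fun _ : SPath s r v => ℂ) 2

/-- The basis vector `ξ_λ` of the model space. -/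
def xi {v : V} (p : SPath s r v) : HGv s r v := lp.single 2 p 1

/-- Pulling back a function `x : ι → ℂ` along a partially defined map `f`. -/
def pullFun {ι κ : Type*} (f : κ → Option ι) (x : ι → ℂ) (k : κ) : ℂ :=
  ((f k).map x).getD 0

theorem pullFun_core {ι κ : Type*} (f : κ → Option ι)
    (hf : ∀ ⦃k k' : κ⦄ ⦃i : ι⦄, f k = some i → f k' = some i → k = k')
    (x : lp (fun _ : ι => ℂ) 2) :
    Memℓp (pullFun f ⇑x) 2 ∧
      ∑' k : κ, ‖pullFun f ⇑x k‖ ^ (2 : ℝ) ≤ ∑' i : ι, ‖x i‖ ^ (2 : ℝ) := by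
  classical
  have hp : 0 < (2 : ℝ≥0∞).toReal := by norm_num
  have hx : Summable fun i : ι => ‖x i‖ ^ (2 : ℝ) := by
    have := lp.memℓp x
    rw [memℓp_gen_iff hp] at this
    simpa using this
  set σ : Set κ := {k : κ | (f k).isSome} with hσ
  have hmem : ∀ k : σ, ∃ i, f (k : κ) = some i := fun k => Option.isSome_iff_exists.mp k.2
  set h : σ → ι := fun k => (f (k : κ)).get k.2 with hh
  have hfk : ∀ k : σ, f (k : κ) = some (h k) := fun k => (Option.some_get k.2).symm
  have hinj : Function.Injective h := by
    intro a b hab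
    have ha := hfk a
    have hb := hfk b
    rw [hab] at ha
    exact Subtype.ext (hf ha hb)
  have hval : ∀ k : σ, pullFun f ⇑x (k : κ) = x (h k) := by
    intro k
    simp [pullFun, hfk k]
  set g : κ → ℝ := fun k => ‖pullFun f ⇑x k‖ ^ (2 : ℝ) with hg
  have hsupp : Function.support g ⊆ σ := by
    intro k hk
    by_contra hks
    have : f k = none := by
      rw [hσ] at hks
      simpa [Option.isNone_iff_eq_none, Option.not_isSome_iff_eq_none] using hks
    apply hk
    simp [hg, pullFun, this, Real.zero_rpow (by norm_num : (2:ℝ) ≠ 0)]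
  have hcomp : (g ∘ (Subtype.val : σ → κ)) = (fun i => ‖x i‖ ^ (2 : ℝ)) ∘ h := by
    funext k
    simp [hg, Function.comp, hval k]
  have hsummσ : Summable (g ∘ (Subtype.val : σ → κ)) := by
    rw [hcomp]; exact hx.comp_injective hinj
  have hsumm : Summable g := by
    obtain ⟨a, ha⟩ := hsummσ
    exact ⟨a, (hasSum_subtype_iff_of_support_subset hsupp).mp ha⟩
  constructor
  · apply memℓp_gen
    have : (fun k => ‖pullFun f ⇑x k‖ ^ (2 : ℝ≥0∞).toReal) = g := by
      funext k; simp [hg]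
    rw [this]
    exact hsumm
  · have h1 : ∑' k : κ, g k = ∑' k : σ, g k := (tsum_subtype_eq_of_support_subset hsupp).symm
    have h2 : ∑' k : σ, g k ≤ ∑' i : ι, ‖x i‖ ^ (2 : ℝ) := by
      have := tsum_comp_le_tsum_of_inj hx
        (fun i => Real.rpow_nonneg (norm_nonneg _) _) hinj
      calc ∑' k : σ, g k = ∑' k : σ, ((fun i => ‖x i‖ ^ (2 : ℝ)) ∘ h) k := by
            rw [← hcomp]; rfl
        _ ≤ ∑' i : ι, ‖x i‖ ^ (2 : ℝ) := this
    exact h1.trans_le h2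

/-- The bounded operator `lp² ι → lp² κ` induced by a partially defined injection. -/
def pullCLM {ι κ : Type*} (f : κ → Option ι)
    (hf : ∀ ⦃k k' : κ⦄ ⦃i : ι⦄, f k = some i → f k' = some i → k = k') :
    lp (fun _ : ι => ℂ) 2 →L[ℂ] lp (fun _ : κ => ℂ) 2 :=
  LinearMap.mkContinuous
    { toFun := fun x => ⟨pullFun f ⇑x, (pullFun_core f hf x).1⟩
      map_add' := by
        intro x y
        apply lp.ext
        funext k
        show pullFun f ⇑(x + y) k = pullFun f ⇑x k + pullFun f ⇑y k
        rw [lp.coeFn_add]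
        unfold pullFun
        cases f k <;> simp
      map_smul' := by
        intro c x
        apply lp.ext
        funext k
        show pullFun f ⇑(c • x) k = c • pullFun f ⇑x k
        rw [lp.coeFn_smul]
        unfold pullFun
        cases f k <;> simp }
    1
    (by
      intro x
      have hp : 0 < (2 : ℝ≥0∞).toReal := by norm_num
      rw [one_mul]
      set y : lp (fun _ : κ => ℂ) 2 := ⟨pullFun f ⇑x, (pullFun_core f hf x).1⟩ with hy
      show ‖y‖ ≤ ‖x‖
      have hle := (pullFun_core f hf x).2
      have h1 : ‖y‖ ^ (2:ℝ) = ∑' k : κ, ‖pullFun f ⇑x k‖ ^ (2 : ℝ) := by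
        simpa using lp.norm_rpow_eq_tsum hp y
      have h2 : ‖x‖ ^ (2:ℝ) = ∑' i : ι, ‖x i‖ ^ (2 : ℝ) := by
        simpa using lp.norm_rpow_eq_tsum hp x
      have key : ‖y‖ ^ (2:ℝ) ≤ ‖x‖ ^ (2:ℝ) := by rw [h1, h2]; exact hle
      have k2 : ‖y‖ ^ (2:ℕ) ≤ ‖x‖ ^ (2:ℕ) := by
        rw [← Real.rpow_natCast ‖y‖ 2, ← Real.rpow_natCast ‖x‖ 2]
        exact_mod_cast key
      have hs := Real.sqrt_le_sqrt k2
      rwa [Real.sqrt_sq (norm_nonneg y), Real.sqrt_sq (norm_nonneg x)] at hs)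

/-- Decoding map for the model projection at `w`. -/
def decodeP (v w : V) (p : SPath s r v) : Option (SPath s r v) :=
  if p.1.rng = w then some p else none

/-- Decoding map for the model partial isometry at `e`. -/
def decodeS (v : V) (e : E) (p : SPath s r v) : Option (SPath s r v) :=
  if p.1.edges.head? = some e then some ⟨p.1.tail, p.2⟩ else none

theorem decodeP_inj (v w : V) :
    ∀ ⦃k k' : SPath s r v⦄ ⦃i : SPath s r v⦄,
      decodeP v w k = some i → decodeP v w k' = some i → k = k' := by
  intro k k' i h1 h2
  unfold decodeP at h1 h2
  split_ifs at h1 h2 <;> simp_all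

theorem decodeS_inj (v : V) (e : E) :
    ∀ ⦃k k' : SPath s r v⦄ ⦃i : SPath s r v⦄,
      decodeS v e k = some i → decodeS v e k' = some i → k = k' := by
  intro k k' i h1 h2
  unfold decodeS at h1 h2
  split_ifs at h1 h2 with he1 he2
  have hi1 := Option.some.inj h1
  have hi2 := Option.some.inj h2
  apply Subtype.ext
  apply GPath.ext'
  · rw [k.2, k'.2]
  · obtain ⟨t1, ht1⟩ := List.head?_eq_some_iff.mp he1
    obtain ⟨t2, ht2⟩ := List.head?_eq_some_iff.mp he2
    have e1 : k.1.tail.edges = t1 := by simp [GPath.tail, ht1]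
    have e2 : k'.1.tail.edges = t2 := by simp [GPath.tail, ht2]
    have : k.1.tail.edges = k'.1.tail.edges := by
      rw [show k.1.tail = i.1 from congrArg Subtype.val hi1,
        show k'.1.tail = i.1 from congrArg Subtype.val hi2]
    rw [ht1, ht2]
    rw [e1, e2] at this
    rw [this]

/-- The model projection `P^v_w` on `H_{G,v}`: the orthogonal projection onto the span
of the basis vectors `ξ_λ` with `r(λ) = w`. -/
def modelP (s r : E → V) (v w : V) : HGv s r v →L[ℂ] HGv s r v :=
  pullCLM (decodeP v w) (decodeP_inj v w)

/-- The model partial isometry `S^v_e` on `H_{G,v}`: it maps `ξ_λ` to `ξ_{eλ}`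
when `s(e) = r(λ)`, and to `0` otherwise. -/
def modelS (s r : E → V) (v : V) (e : E) : HGv s r v →L[ℂ] HGv s r v :=
  pullCLM (decodeS v e) (decodeS_inj v e)

/-! ### Reducing subspaces, wandering spaces, maximality -/

universe u

/-- A subspace is reducing for a family of operators if it is invariant under all of them
and all their adjoints. -/
def Reduces (Q : V → H →L[ℂ] H) (T : E → H →L[ℂ] H) (M : Submodule ℂ H) : Prop :=
  (∀ w : V, ∀ x ∈ M, Q w x ∈ M ∧ adjoint (Q w) x ∈ M) ∧
  (∀ e : E, ∀ x ∈ M, T e x ∈ M ∧ adjoint (T e) x ∈ M)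

/-- The wandering space `W_v = {x | Q_v x = x, T_e* x = 0 for all e ∈ r⁻¹(v)}`. -/
def wandering (s r : E → V) (Q : V → H →L[ℂ] H) (T : E → H →L[ℂ] H) (v : V) :
    Submodule ℂ H where
  carrier := {x : H | Q v x = x ∧ ∀ e : E, r e = v → adjoint (T e) x = 0}
  add_mem' := by
    intro a b ha hb
    refine ⟨?_, fun e he => ?_⟩
    · rw [map_add, ha.1, hb.1]
    · rw [map_add, ha.2 e he, hb.2 e he, add_zero]
  zero_mem' := ⟨map_zero _, fun e _ => map_zero _⟩
  smul_mem' := by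
    intro c x hx
    refine ⟨?_, fun e he => ?_⟩
    · rw [map_smul, hx.1]
    · rw [map_smul, hx.2 e he, smul_zero]

/-- The restriction of a TCK family to a reducing subspace `M` is a full Cuntz-Krieger
family (expressed via the action on vectors of `M` in the ambient space). -/
def IsFullCKOn (s r : E → V) (Q : V → H →L[ℂ] H) (T : E → H →L[ℂ] H)
    (M : Submodule ℂ H) : Prop :=
  ∀ v : V, (∃ e, r e = v) → ∀ x ∈ M,
    HasSum (fun e : {e : E // r e = v} => T e.1 (adjoint (T e.1) x)) (Q v x)

/-- A TCK family is maximal if for every TCK family dilating it, the range of the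
dilation isometry is reducing. -/
def IsMaxTCK {V E : Type*} (s r : E → V) {H : Type u} [NormedAddCommGroup H]
    [InnerProductSpace ℂ H] [CompleteSpace H]
    (P : V → H →L[ℂ] H) (S : E → H →L[ℂ] H) : Prop :=
  ∀ (K : Type u) [NormedAddCommGroup K] [InnerProductSpace ℂ K] [CompleteSpace K],
    ∀ (Q : V → K →L[ℂ] K) (T : E → K →L[ℂ] K) (W : H →L[ℂ] K),
      IsTCK s r Q T → Dilates P S Q T W →
        ∀ (g : V ⊕ E) (x : H),
          gen Q T g (W x) ∈ Set.range W ∧ adjoint (gen Q T g) (W x) ∈ Set.range W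

end GraphPaper
namespace GraphPaper

variable {V E : Type*} {s r : E → V}

/-- The length-zero path as a based path. -/
def nilS (s r : E → V) (v : V) : SPath s r v := ⟨GPath.nil s r v, rfl⟩

/-- The tail of a based path. -/
def tailS {v : V} (p : SPath s r v) : SPath s r v := ⟨p.1.tail, p.2⟩

theorem xi_coe {v : V} (p q : SPath s r v) :
    (xi p : ∀ _ : SPath s r v, ℂ) q = if q = p then 1 else 0 := by
  rw [xi, lp.single_apply]
  split_ifs with h h2 h3 <;> simp_all

theorem pullCLM_coe {ι κ : Type*} (f : κ → Option ι)
    (hf : ∀ ⦃k k' : κ⦄ ⦃i : ι⦄, f k = some i → f k' = some i → k = k')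
    (x : lp (fun _ : ι => ℂ) 2) (k : κ) :
    (pullCLM f hf x : ∀ _ : κ, ℂ) k = pullFun f ⇑x k := rfl

theorem modelP_xi (v w : V) (p : SPath s r v) :
    modelP s r v w (xi p) = if p.1.rng = w then xi p else 0 := by
  apply lp.ext
  funext q
  rw [modelP, pullCLM_coe]
  unfold pullFun decodeP
  split_ifs with h1 h2 h2
  · simp [xi_coe]
  · -- q.rng = w, p.rng ≠ w : show xi p q = 0
    simp only [Option.map_some, Option.getD_some, xi_coe]
    rw [if_neg]; · rfl
    rintro rfl; exact h2 h1
  · -- q.rng ≠ w, p.rng = w : RHS (xi p) q = 0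
    simp only [Option.map_none, Option.getD_none, xi_coe]
    rw [if_neg]
    rintro rfl; exact h1 h2
  · simp

theorem inner_xi_left {v : V} (p : SPath s r v) (f : HGv s r v) :
    (inner ℂ (xi p) f : ℂ) = f p := by
  rw [xi, lp.inner_single_left]
  simp

theorem modelS_xi_head {v : V} (e : E) (p : SPath s r v)
    (h : p.1.edges.head? = some e) :
    modelS s r v e (xi (tailS p)) = xi p := by
  apply lp.ext
  funext q
  rw [modelS, pullCLM_coe]
  unfold pullFun decodeS
  split_ifs with h1
  · simp only [Option.map_some, Option.getD_some, xi_coe]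
    by_cases hq : q = p
    · subst hq; simp [tailS]
    · rw [if_neg, if_neg hq]
      intro ht
      exact hq (decodeS_inj v e (i := tailS p)
        (by rw [decodeS, if_pos h1]; exact congrArg some ht)
        (by rw [decodeS, if_pos h]; rfl))
  · simp only [Option.map_none, Option.getD_none, xi_coe]
    rw [if_neg]
    rintro rfl
    exact h1 h

theorem modelS_coe_nilS (v : V) (e : E) (u : HGv s r v) :
    (modelS s r v e u : ∀ _ : SPath s r v, ℂ) (nilS s r v) = 0 := by
  rw [modelS, pullCLM_coe]
  unfold pullFun decodeS
  rw [if_neg]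
  · simp
  · simp [nilS, GPath.nil]

theorem hgv_hasSum {v : V} (u : HGv s r v) :
    HasSum (fun p : SPath s r v => u p • xi p) u := by
  have h := lp.hasSum_single ENNReal.ofNat_ne_top u
  have heq : (fun p : SPath s r v => u p • xi p)
      = fun p : SPath s r v => lp.single 2 p (u p) := by
    funext p
    rw [xi, ← lp.single_smul, smul_eq_mul, mul_one]
  rw [heq]
  exact h

theorem eq_on_xi_dense {v : V} {F : Type*} [NormedAddCommGroup F] [NormedSpace ℂ F]
    (f : HGv s r v →L[ℂ] F) (hf : ∀ p, f (xi p) = 0) (u : HGv s r v) : f u = 0 := by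
  have h1 : HasSum (fun p : SPath s r v => f (u p • xi p)) (f u) :=
    (hgv_hasSum u).mapL f
  have h2 : (fun p : SPath s r v => f (u p • xi p)) = fun _ => 0 := by
    funext p
    rw [map_smul, hf, smul_zero]
  rw [h2] at h1
  exact (h1.unique hasSum_zero)

theorem xi_norm {v : V} (p : SPath s r v) : ‖(xi p : HGv s r v)‖ = 1 := by
  rw [xi]
  have := lp.norm_single (E := fun _ : SPath s r v => ℂ) (p := 2) (by norm_num)
    p (1 : ℂ)
  simpa using this

section HilbertAux

variable {H : Type*} [NormedAddCommGroup H] [InnerProductSpace ℂ H] [CompleteSpace H]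

theorem eq_zero_of_inner_span {S : Set H}
    (htot : (Submodule.span ℂ S).topologicalClosure = ⊤)
    {z : H} (hz : ∀ u ∈ S, (inner ℂ z u : ℂ) = 0) : z = 0 := by
  have hbot : (Submodule.span ℂ S)ᗮ = ⊥ := Submodule.topologicalClosure_eq_top_iff.mp htot
  have hmem : z ∈ (Submodule.span ℂ S)ᗮ := by
    rw [Submodule.mem_orthogonal']
    intro u hu
    induction hu using Submodule.span_induction with
    | mem x hx => exact hz x hx
    | zero => exact inner_zero_right z
    | add x y _ _ hx hy => rw [inner_add_right, hx, hy, add_zero]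
    | smul a x _ hx => rw [inner_smul_right, hx, mul_zero]
  rw [hbot] at hmem
  simpa using hmem

theorem mem_of_xi_mem {v : V} (Wp : HGv s r v →ₗᵢ[ℂ] H) (M : Submodule ℂ H)
    (hM : IsClosed (M : Set H)) (h : ∀ p : SPath s r v, Wp (xi p) ∈ M) (u : HGv s r v) :
    Wp u ∈ M := by
  have h1 : HasSum (fun p : SPath s r v => Wp.toContinuousLinearMap (u p • xi p))
      (Wp.toContinuousLinearMap u) := (hgv_hasSum u).mapL Wp.toContinuousLinearMap
  have h2 : ∀ sfin : Finset (SPath s r v),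
      ∑ p ∈ sfin, Wp.toContinuousLinearMap (u p • xi p) ∈ M := by
    intro sfin
    refine Submodule.sum_mem M fun p _ => ?_
    show Wp.toContinuousLinearMap (u p • xi p) ∈ M
    rw [map_smul]
    exact M.smul_mem _ (h p)
  exact hM.mem_of_tendsto h1 (Filter.Eventually.of_forall h2)

universe w'

theorem onb_card_le {ι ι' : Type w'} (F : Submodule ℂ H) (b : ι → H) (b' : ι' → H)
    (hb : Orthonormal ℂ b) (hb' : Orthonormal ℂ b')
    (hbF : ∀ i, b i ∈ F) (hb'F : ∀ i', b' i' ∈ F)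
    (hmax' : ∀ x ∈ F, (∀ i', (inner ℂ (b' i') x : ℂ) = 0) → x = 0) :
    Cardinal.mk ι ≤ Cardinal.mk ι' := by
  classical
  cases finite_or_infinite ι' with
  | inl hfin =>
    haveI := hfin
    haveI : Fintype ι' := Fintype.ofFinite ι'
    set C := Submodule.span ℂ (Set.range b') with hC
    haveI : FiniteDimensional ℂ C := FiniteDimensional.span_of_finite ℂ (Set.finite_range b')
    haveI : CompleteSpace C := FiniteDimensional.complete ℂ C
    have hCF : C ≤ F := Submodule.span_le.mpr (Set.range_subset_iff.mpr hb'F)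
    have hbC : ∀ i, b i ∈ C := by
      intro i
      have hd := Submodule.sub_starProjection_mem_orthogonal (K := C) (b i)
      have hdF : b i - Submodule.orthogonalProjection C (b i) ∈ F :=
        F.sub_mem (hbF i) (hCF (Submodule.orthogonalProjection C (b i)).2)
      have hz : ∀ i', (inner ℂ (b' i') (b i - Submodule.orthogonalProjection C (b i)) : ℂ) = 0 :=
        fun i' => (Submodule.mem_orthogonal C _).mp hd _
          (Submodule.subset_span (Set.mem_range_self i'))
      have h0 := hmax' _ hdF hz
      have hbi : b i = ↑(Submodule.orthogonalProjection C (b i)) := by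
        rwa [sub_eq_zero] at h0
      rw [hbi]
      exact (Submodule.orthogonalProjection C (b i)).2
    have hli : LinearIndependent ℂ (fun i => (⟨b i, hbC i⟩ : C)) := by
      apply LinearIndependent.of_comp C.subtype
      have : (C.subtype ∘ fun i => (⟨b i, hbC i⟩ : C)) = b := rfl
      rw [this]
      exact hb.linearIndependent
    haveI : Finite ι := hli.finite
    haveI : Fintype ι := Fintype.ofFinite ι
    have h1 : Fintype.card ι ≤ Module.finrank ℂ C := hli.fintype_card_le_finrank
    have h2 : Module.finrank ℂ C ≤ Fintype.card ι' := by
      have h3 := finrank_span_le_card (R := ℂ) (Set.range b')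
      refine h3.trans ?_
      rw [Set.toFinset_range]
      exact (Finset.card_image_le).trans (by simp)
    rw [Cardinal.mk_fintype, Cardinal.mk_fintype]
    exact_mod_cast h1.trans h2
  | inr hinf =>
    haveI := hinf
    have hcov : ∀ i : ι, ∃ i', (inner ℂ (b i) (b' i') : ℂ) ≠ 0 := by
      intro i
      by_contra hc
      push_neg at hc
      have h0 : b i = 0 := hmax' (b i) (hbF i) fun i' =>
        inner_eq_zero_symm.mp (hc i')
      have hn := hb.1 i
      rw [h0] at hn
      simp at hn
    have hcnt : ∀ i' : ι', {i : ι | (inner ℂ (b i) (b' i') : ℂ) ≠ 0}.Countable := by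
      intro i'
      have hs : Summable (fun i : ι => ‖(inner ℂ (b i) (b' i') : ℂ)‖ ^ 2) :=
        hb.inner_products_summable (b' i')
      refine hs.countable_support.mono ?_
      intro i hi
      simp only [Function.mem_support]
      intro h0
      apply hi
      have : ‖(inner ℂ (b i) (b' i') : ℂ)‖ = 0 := by
        have := pow_eq_zero_iff (n := 2) (by norm_num) |>.mp h0
        exact this
      simpa using this
    have huniv : (⋃ i' : ι', {i : ι | (inner ℂ (b i) (b' i') : ℂ) ≠ 0}) = Set.univ := by
      apply Set.eq_univ_of_forall
      intro i
      obtain ⟨i', hi'⟩ := hcov i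
      exact Set.mem_iUnion.mpr ⟨i', hi'⟩
    calc Cardinal.mk ι = Cardinal.mk (⋃ i' : ι', {i : ι | (inner ℂ (b i) (b' i') : ℂ) ≠ 0} : Set ι) := by
          rw [huniv, Cardinal.mk_univ]
      _ ≤ Cardinal.mk ι' * ⨆ i' : ι', Cardinal.mk ({i : ι | (inner ℂ (b i) (b' i') : ℂ) ≠ 0} : Set ι) :=
          Cardinal.mk_iUnion_le _
      _ ≤ Cardinal.mk ι' * Cardinal.aleph0 := by
          refine mul_le_mul_right ?_ _
          refine ciSup_le' fun i' => ?_
          haveI := (hcnt i').to_subtype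
          exact Cardinal.mk_le_aleph0
      _ = Cardinal.mk ι' := Cardinal.mul_aleph0_eq (Cardinal.aleph0_le_mk ι')

end HilbertAux

theorem mem_wandering_iff {H : Type*} [NormedAddCommGroup H] [InnerProductSpace ℂ H] [CompleteSpace H]
    {Q : V → H →L[ℂ] H} {T : E → H →L[ℂ] H} {v : V} {x : H} :
    x ∈ wandering s r Q T v ↔
      (Q v x = x ∧ ∀ e : E, r e = v → ContinuousLinearMap.adjoint (T e) x = 0) := Iff.rfl

section Decomp

universe w'

variable {H HR : Type*}
  [NormedAddCommGroup H] [InnerProductSpace ℂ H] [CompleteSpace H]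
  [NormedAddCommGroup HR] [InnerProductSpace ℂ HR] [CompleteSpace HR]
  {Q : V → H →L[ℂ] H} {T : E → H →L[ℂ] H}
  {A : {v : V // ∃ e, r e = v} → Type w'}
  {W : ∀ p : Σ v : {v : V // ∃ e, r e = v}, A v, HGv s r p.1.1 →ₗᵢ[ℂ] H}
  {WR : HR →ₗᵢ[ℂ] H}
  {R : V → HR →L[ℂ] HR} {L : E → HR →L[ℂ] HR}

theorem wandering_isClosed (Q : V → H →L[ℂ] H) (T : E → H →L[ℂ] H) (v : V) :
    IsClosed ((wandering s r Q T v : Submodule ℂ H) : Set H) := by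
  have h1 : IsClosed {x : H | Q v x = x} := isClosed_eq (Q v).continuous continuous_id
  have h2 : IsClosed {x : H | ∀ e : E, r e = v → adjoint (T e) x = 0} := by
    have heq : {x : H | ∀ e : E, r e = v → adjoint (T e) x = 0} =
        ⋂ e : E, {x : H | r e = v → adjoint (T e) x = 0} := by
      ext x; simp
    rw [heq]
    refine isClosed_iInter fun e => ?_
    by_cases he : r e = v
    · have heq2 : {x : H | r e = v → adjoint (T e) x = 0} = {x : H | adjoint (T e) x = 0} := by
        ext x; simp [he]
      rw [heq2]
      exact isClosed_eq (adjoint (T e)).continuous continuous_const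
    · have heq2 : {x : H | r e = v → adjoint (T e) x = 0} = Set.univ := by
        ext x; simp [he]
      rw [heq2]; exact isClosed_univ
  have heq3 : ((wandering s r Q T v : Submodule ℂ H) : Set H) =
      {x : H | Q v x = x} ∩ {x : H | ∀ e : E, r e = v → adjoint (T e) x = 0} := rfl
  rw [heq3]; exact h1.inter h2

/-- Path operators applied to the vacuum vector give the `xi` vectors. -/
theorem W_xi_eq
    (hintS : ∀ (p : Σ v : {v : V // ∃ e, r e = v}, A v) (e : E) (x),
      T e (W p x) = W p (modelS s r p.1.1 e x))
    (p : Σ v : {v : V // ∃ e, r e = v}, A v) :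
    ∀ (l : List E) (lam : SPath s r p.1.1), lam.1.edges = l →
      W p (xi lam) = ((l.map T).prod) (W p (xi (nilS s r p.1.1))) := by
  intro l
  induction l with
  | nil =>
    intro lam hlam
    have hl : lam = nilS s r p.1.1 := Subtype.ext (GPath.ext' lam.2 hlam)
    rw [hl]
    simp
  | cons e es ih =>
    intro lam hlam
    have hhead : lam.1.edges.head? = some e := by rw [hlam]; rfl
    have htail : (tailS lam).1.edges = es := by simp [tailS, GPath.tail, hlam]
    rw [← modelS_xi_head e lam hhead, ← hintS, ih (tailS lam) htail]
    simp [ContinuousLinearMap.mul_apply]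

/-- The vacuum vectors are wandering vectors. -/
theorem D1_mem_wandering
    (horth : ∀ p q : Σ v : {v : V // ∃ e, r e = v}, A v, p ≠ q →
      ∀ x y, (inner ℂ (W p x) (W q y) : ℂ) = 0)
    (horthR : ∀ (p : Σ v : {v : V // ∃ e, r e = v}, A v) (x) (y : HR),
      (inner ℂ (W p x) (WR y) : ℂ) = 0)
    (htotal : (Submodule.span ℂ (Set.range ⇑WR ∪
      ⋃ p : Σ v : {v : V // ∃ e, r e = v}, A v, Set.range ⇑(W p))).topologicalClosure = ⊤)
    (hintP : ∀ (p : Σ v : {v : V // ∃ e, r e = v}, A v) (w : V) (x),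
      Q w (W p x) = W p (modelP s r p.1.1 w x))
    (hintS : ∀ (p : Σ v : {v : V // ∃ e, r e = v}, A v) (e : E) (x),
      T e (W p x) = W p (modelS s r p.1.1 e x))
    (hintRS : ∀ (e : E) (x : HR), T e (WR x) = WR (L e x))
    (p : Σ v : {v : V // ∃ e, r e = v}, A v) :
    W p (xi (nilS s r p.1.1)) ∈ wandering s r Q T p.1.1 := by
  refine mem_wandering_iff.mpr ⟨?_, ?_⟩
  -- marker
  · rw [hintP, modelP_xi, if_pos]
    rfl
  · intro e he
    apply eq_zero_of_inner_span htotal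
    intro u hu
    rw [ContinuousLinearMap.adjoint_inner_left]
    rcases hu with ⟨y, rfl⟩ | hu
    · rw [hintRS e y]
      exact horthR p _ (L e y)
    · obtain ⟨q, hq⟩ := Set.mem_iUnion.mp hu
      obtain ⟨x0, rfl⟩ := hq
      rw [hintS q e x0]
      by_cases hpq : p = q
      · subst hpq
        rw [LinearIsometry.inner_map_map, inner_xi_left, modelS_coe_nilS]
      · exact horth p q hpq _ _

/-- The vacuum vectors at a fixed vertex form an orthonormal family. -/
theorem D2_orthonormal
    (horth : ∀ p q : Σ v : {v : V // ∃ e, r e = v}, A v, p ≠ q →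
      ∀ x y, (inner ℂ (W p x) (W q y) : ℂ) = 0)
    (v : V) (hv : ∃ e, r e = v) :
    Orthonormal ℂ (fun a : A ⟨v, hv⟩ => W ⟨⟨v, hv⟩, a⟩ (xi (nilS s r v))) := by
  rw [orthonormal_iff_ite]
  intro a a'
  by_cases h : a = a'
  · subst h
    rw [if_pos rfl, LinearIsometry.inner_map_map, inner_xi_left, xi_coe, if_pos rfl]
  · rw [if_neg h]
    refine horth _ _ ?_ _ _
    intro hh
    apply h
    simpa using hh


/-- Maximality: a wandering vector orthogonal to all vacuum vectors at its vertex
is zero. -/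
theorem D3_max
    (hQT : IsTCK s r Q T)
    (hRLfull : IsFullCK s r R L)
    (horth : ∀ p q : Σ v : {v : V // ∃ e, r e = v}, A v, p ≠ q →
      ∀ x y, (inner ℂ (W p x) (W q y) : ℂ) = 0)
    (horthR : ∀ (p : Σ v : {v : V // ∃ e, r e = v}, A v) (x) (y : HR),
      (inner ℂ (W p x) (WR y) : ℂ) = 0)
    (htotal : (Submodule.span ℂ (Set.range ⇑WR ∪
      ⋃ p : Σ v : {v : V // ∃ e, r e = v}, A v, Set.range ⇑(W p))).topologicalClosure = ⊤)
    (hintP : ∀ (p : Σ v : {v : V // ∃ e, r e = v}, A v) (w : V) (x),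
      Q w (W p x) = W p (modelP s r p.1.1 w x))
    (hintS : ∀ (p : Σ v : {v : V // ∃ e, r e = v}, A v) (e : E) (x),
      T e (W p x) = W p (modelS s r p.1.1 e x))
    (hintRP : ∀ (w : V) (x : HR), Q w (WR x) = WR (R w x))
    (hintRS : ∀ (e : E) (x : HR), T e (WR x) = WR (L e x))
    (v : V) (hv : ∃ e, r e = v) (x : H) (hx : x ∈ wandering s r Q T v)
    (hz : ∀ a : A ⟨v, hv⟩, (inner ℂ (W ⟨⟨v, hv⟩, a⟩ (xi (nilS s r v))) x : ℂ) = 0) :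
    x = 0 := by
  obtain ⟨hx1, hx2⟩ := mem_wandering_iff.mp hx
  apply eq_zero_of_inner_span htotal
  intro u hu
  rcases hu with ⟨y, rfl⟩ | hu
  · -- generator from the full CK part
    have key : (inner ℂ x (WR y) : ℂ) = inner ℂ x (WR (R v y)) := by
      conv_lhs => rw [← hx1]
      rw [← hQT.1 v, ContinuousLinearMap.adjoint_inner_left, hintRP]
    rw [key]
    have h2 := ((hRLfull v hv y).mapL WR.toContinuousLinearMap).mapL (innerSL ℂ x)
    have h3 : (fun e : {e : E // r e = v} =>
        (innerSL ℂ x) (WR.toContinuousLinearMap (L e.1 (adjoint (L e.1) y)))) =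
        fun _ => 0 := by
      funext e
      show (inner ℂ x (WR (L e.1 (adjoint (L e.1) y))) : ℂ) = 0
      rw [← hintRS, ← ContinuousLinearMap.adjoint_inner_left, hx2 e.1 e.2, inner_zero_left]
    rw [h3] at h2
    exact h2.unique hasSum_zero
  · obtain ⟨q, hq⟩ := Set.mem_iUnion.mp hu
    obtain ⟨u0, rfl⟩ := hq
    have hall : ∀ lam : SPath s r q.1.1, (inner ℂ x (W q (xi lam)) : ℂ) = 0 := by
      intro lam
      have key : (inner ℂ x (W q (xi lam)) : ℂ) =
          inner ℂ x (W q (modelP s r q.1.1 v (xi lam))) := by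
        conv_lhs => rw [← hx1]
        rw [← hQT.1 v, ContinuousLinearMap.adjoint_inner_left, hintP]
      rw [key, modelP_xi]
      split_ifs with hrng
      · rcases hl : lam.1.edges with _ | ⟨e, es⟩
        · -- length-zero path: vacuum vector at v
          have hsrc : q.1.1 = v := by
            rw [← lam.2, ← hrng]
            unfold GPath.rng
            rw [hl]
            rfl
          obtain ⟨q1, a⟩ := q
          have hq1 : q1 = ⟨v, hv⟩ := Subtype.ext hsrc
          subst hq1
          have hlam : lam = nilS s r v := Subtype.ext (GPath.ext' lam.2 hl)
          rw [hlam]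
          exact inner_eq_zero_symm.mp (hz a)
        · have hhead : lam.1.edges.head? = some e := by rw [hl]; rfl
          have hre : r e = v := by
            rw [← hrng]
            unfold GPath.rng
            rw [hl]
            rfl
          rw [← modelS_xi_head e lam hhead, ← hintS,
            ← ContinuousLinearMap.adjoint_inner_left, hx2 e hre, inner_zero_left]
      · rw [map_zero, inner_zero_right]
    exact eq_on_xi_dense ((innerSL ℂ x).comp (W q).toContinuousLinearMap) hall u0


/-- The wandering space at a receiving vertex is contained in the closed span of the
shift summands. -/
theorem D4_wandering_le
    (hQT : IsTCK s r Q T)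
    (hRLfull : IsFullCK s r R L)
    (horth : ∀ p q : Σ v : {v : V // ∃ e, r e = v}, A v, p ≠ q →
      ∀ x y, (inner ℂ (W p x) (W q y) : ℂ) = 0)
    (horthR : ∀ (p : Σ v : {v : V // ∃ e, r e = v}, A v) (x) (y : HR),
      (inner ℂ (W p x) (WR y) : ℂ) = 0)
    (htotal : (Submodule.span ℂ (Set.range ⇑WR ∪
      ⋃ p : Σ v : {v : V // ∃ e, r e = v}, A v, Set.range ⇑(W p))).topologicalClosure = ⊤)
    (hintP : ∀ (p : Σ v : {v : V // ∃ e, r e = v}, A v) (w : V) (x),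
      Q w (W p x) = W p (modelP s r p.1.1 w x))
    (hintS : ∀ (p : Σ v : {v : V // ∃ e, r e = v}, A v) (e : E) (x),
      T e (W p x) = W p (modelS s r p.1.1 e x))
    (hintRP : ∀ (w : V) (x : HR), Q w (WR x) = WR (R w x))
    (hintRS : ∀ (e : E) (x : HR), T e (WR x) = WR (L e x))
    (v : V) (hv : ∃ e, r e = v) :
    wandering s r Q T v ≤
      (Submodule.span ℂ (⋃ p : Σ v : {v : V // ∃ e, r e = v}, A v,
        Set.range ⇑(W p))).topologicalClosure := by
  intro x hx
  set C := (Submodule.span ℂ (Set.range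
    (fun a : A ⟨v, hv⟩ => W ⟨⟨v, hv⟩, a⟩ (xi (nilS s r v))))).topologicalClosure with hCdef
  haveI : CompleteSpace C := (Submodule.isClosed_topologicalClosure _).completeSpace_coe
  have hCW : C ≤ wandering s r Q T v := by
    apply Submodule.topologicalClosure_minimal
    · rw [Submodule.span_le]
      rintro _ ⟨a, rfl⟩
      exact D1_mem_wandering horth horthR htotal hintP hintS hintRS ⟨⟨v, hv⟩, a⟩
    · exact wandering_isClosed Q T v
  have hd := Submodule.sub_starProjection_mem_orthogonal (K := C) x
  have hdw : x - ↑(Submodule.orthogonalProjection C x) ∈ wandering s r Q T v :=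
    (wandering s r Q T v).sub_mem hx (hCW (Submodule.orthogonalProjection C x).2)
  have hz : ∀ a : A ⟨v, hv⟩,
      (inner ℂ (W ⟨⟨v, hv⟩, a⟩ (xi (nilS s r v))) (x - ↑(Submodule.orthogonalProjection C x)) : ℂ) = 0 := by
    intro a
    refine (Submodule.mem_orthogonal C _).mp hd _ ?_
    exact (Submodule.le_topologicalClosure _) (Submodule.subset_span (Set.mem_range_self a))
  have h0 := D3_max hQT hRLfull horth horthR htotal hintP hintS hintRP hintRS v hv _ hdw hz
  have hxC : x ∈ C := by
    have hxeq : x = ↑(Submodule.orthogonalProjection C x) := by rwa [sub_eq_zero] at h0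
    rw [hxeq]
    exact (Submodule.orthogonalProjection C x).2
  refine Submodule.topologicalClosure_mono ?_ hxC
  refine Submodule.span_mono ?_
  rintro _ ⟨a, rfl⟩
  exact Set.mem_iUnion.mpr ⟨⟨⟨v, hv⟩, a⟩, Set.mem_range_self _⟩

/-- The closed span of the shift summands is invariant under the `T e`. -/
theorem D7_T_mem
    (hintS : ∀ (p : Σ v : {v : V // ∃ e, r e = v}, A v) (e : E) (x),
      T e (W p x) = W p (modelS s r p.1.1 e x))
    (e : E) {x : H}
    (hx : x ∈ (Submodule.span ℂ (⋃ p : Σ v : {v : V // ∃ e, r e = v}, A v,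
      Set.range ⇑(W p))).topologicalClosure) :
    T e x ∈ (Submodule.span ℂ (⋃ p : Σ v : {v : V // ∃ e, r e = v}, A v,
      Set.range ⇑(W p))).topologicalClosure := by
  set X := Submodule.span ℂ (⋃ p : Σ v : {v : V // ∃ e, r e = v}, A v, Set.range ⇑(W p))
    with hXdef
  have hmaps : Set.MapsTo (T e) (X : Set H) (X : Set H) := by
    intro u hu
    show T e u ∈ X
    induction hu using Submodule.span_induction with
    | mem z hz =>
      obtain ⟨p, hp⟩ := Set.mem_iUnion.mp hz
      obtain ⟨x0, rfl⟩ := hp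
      rw [hintS p e x0]
      exact Submodule.subset_span (Set.mem_iUnion.mpr ⟨p, Set.mem_range_self _⟩)
    | zero => rw [map_zero]; exact X.zero_mem
    | add a b _ _ ha hb => rw [map_add]; exact X.add_mem ha hb
    | smul c a _ ha => rw [map_smul]; exact X.smul_mem c ha
  show T e x ∈ closure (X : Set H)
  exact map_mem_closure (T e).continuous hx hmaps

/-- The full CK summand is the orthogonal complement of the span of the shift summands. -/
theorem D6_range_eq
    (horthR : ∀ (p : Σ v : {v : V // ∃ e, r e = v}, A v) (x) (y : HR),
      (inner ℂ (W p x) (WR y) : ℂ) = 0)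
    (htotal : (Submodule.span ℂ (Set.range ⇑WR ∪
      ⋃ p : Σ v : {v : V // ∃ e, r e = v}, A v, Set.range ⇑(W p))).topologicalClosure = ⊤) :
    (Submodule.span ℂ (⋃ p : Σ v : {v : V // ∃ e, r e = v}, A v, Set.range ⇑(W p)))ᗮ =
      LinearMap.range WR.toLinearMap := by
  set X := Submodule.span ℂ (⋃ p : Σ v : {v : V // ∃ e, r e = v}, A v, Set.range ⇑(W p))
    with hXdef
  set MR := LinearMap.range WR.toLinearMap with hMRdef
  have hMRclosed : IsClosed (MR : Set H) := by
    have h1 : IsClosed (Set.range ⇑WR) := WR.isometry.isClosedEmbedding.isClosed_range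
    have h2 : (MR : Set H) = Set.range ⇑WR := by
      rw [hMRdef, LinearMap.coe_range, LinearIsometry.coe_toLinearMap]
    rwa [h2]
  haveI : CompleteSpace MR := hMRclosed.completeSpace_coe
  have hMRle : MR ≤ Xᗮ := by
    rintro _ ⟨y, rfl⟩
    rw [Submodule.mem_orthogonal]
    intro u hu
    induction hu using Submodule.span_induction with
    | mem z hz =>
      obtain ⟨p, hp⟩ := Set.mem_iUnion.mp hz
      obtain ⟨x0, rfl⟩ := hp
      exact horthR p x0 y
    | zero => exact inner_zero_left _
    | add a b _ _ ha hb => rw [inner_add_left, ha, hb, add_zero]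
    | smul c a _ ha => rw [inner_smul_left, ha, mul_zero]
  refine le_antisymm ?_ hMRle
  intro x hx
  have hd := Submodule.sub_starProjection_mem_orthogonal (K := MR) x
  have hdX : x - ↑(Submodule.orthogonalProjection MR x) ∈ Xᗮ :=
    Xᗮ.sub_mem hx (hMRle (Submodule.orthogonalProjection MR x).2)
  have h0 : x - ↑(Submodule.orthogonalProjection MR x) = 0 := by
    apply eq_zero_of_inner_span htotal
    intro u hu
    rcases hu with ⟨y, rfl⟩ | hu
    · rw [← inner_eq_zero_symm]
      exact (Submodule.mem_orthogonal MR _).mp hd _ ⟨y, rfl⟩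
    · rw [← inner_eq_zero_symm]
      exact (Submodule.mem_orthogonal X _).mp hdX _ (Submodule.subset_span hu)
  have hxeq : x = ↑(Submodule.orthogonalProjection MR x) := by rwa [sub_eq_zero] at h0
  rw [hxeq]
  exact (Submodule.orthogonalProjection MR x).2

end Decomp

end GraphPaper

namespace GraphPaper

set_option maxHeartbeats 2000000 in
set_option synthInstance.maxHeartbeats 400000 in
/-- Wold decomposition, uniqueness. Suppose a TCK family `(Q, T)` on
`H` is unitarily equivalent to the direct sum, over `v ∈ V_r`, of copies of the model
family `(P^v, S^v)` with multiplicity index sets `A v`, together with a full CK family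
`(R, L)`; and also to such a direct sum with multiplicities `A' v` and full CK family
`(R', L')`.  (The unitary equivalence with the direct sum is expressed by families of
isometries onto pairwise orthogonal jointly total reducing subspaces intertwining the
corresponding summands.)  Then `A v` and `A' v` have the same cardinality for every
`v ∈ V_r`, and `(R, L)` is unitarily equivalent to `(R', L')`. -/
theorem statement_8 {V E : Type*} [Countable V] [Countable E]
    {H HR HR' : Type*}
    [NormedAddCommGroup H] [InnerProductSpace ℂ H] [CompleteSpace H]
    [NormedAddCommGroup HR] [InnerProductSpace ℂ HR] [CompleteSpace HR]
    [NormedAddCommGroup HR'] [InnerProductSpace ℂ HR'] [CompleteSpace HR']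
    (s r : E → V)
    (Q : V → H →L[ℂ] H) (T : E → H →L[ℂ] H) (hQT : IsTCK s r Q T)
    (A A' : {v : V // ∃ e, r e = v} → Type w)
    (R : V → HR →L[ℂ] HR) (L : E → HR →L[ℂ] HR)
    (hRL : IsTCK s r R L) (hRLfull : IsFullCK s r R L)
    (R' : V → HR' →L[ℂ] HR') (L' : E → HR' →L[ℂ] HR')
    (hRL' : IsTCK s r R' L') (hRLfull' : IsFullCK s r R' L')
    -- first decomposition of (Q, T)
    (W : ∀ p : Σ v : {v : V // ∃ e, r e = v}, A v, HGv s r p.1.1 →ₗᵢ[ℂ] H)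
    (WR : HR →ₗᵢ[ℂ] H)
    (horth : ∀ p q : Σ v : {v : V // ∃ e, r e = v}, A v, p ≠ q →
      ∀ x y, (inner ℂ (W p x) (W q y) : ℂ) = 0)
    (horthR : ∀ (p : Σ v : {v : V // ∃ e, r e = v}, A v) (x) (y : HR),
      (inner ℂ (W p x) (WR y) : ℂ) = 0)
    (htotal : (Submodule.span ℂ (Set.range ⇑WR ∪
      ⋃ p : Σ v : {v : V // ∃ e, r e = v}, A v, Set.range ⇑(W p))).topologicalClosure = ⊤)
    (hintP : ∀ (p : Σ v : {v : V // ∃ e, r e = v}, A v) (w : V) (x),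
      Q w (W p x) = W p (modelP s r p.1.1 w x))
    (hintS : ∀ (p : Σ v : {v : V // ∃ e, r e = v}, A v) (e : E) (x),
      T e (W p x) = W p (modelS s r p.1.1 e x))
    (hintRP : ∀ (w : V) (x : HR), Q w (WR x) = WR (R w x))
    (hintRS : ∀ (e : E) (x : HR), T e (WR x) = WR (L e x))
    -- second decomposition of (Q, T)
    (W' : ∀ p : Σ v : {v : V // ∃ e, r e = v}, A' v, HGv s r p.1.1 →ₗᵢ[ℂ] H)
    (WR' : HR' →ₗᵢ[ℂ] H)
    (horth' : ∀ p q : Σ v : {v : V // ∃ e, r e = v}, A' v, p ≠ q →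
      ∀ x y, (inner ℂ (W' p x) (W' q y) : ℂ) = 0)
    (horthR' : ∀ (p : Σ v : {v : V // ∃ e, r e = v}, A' v) (x) (y : HR'),
      (inner ℂ (W' p x) (WR' y) : ℂ) = 0)
    (htotal' : (Submodule.span ℂ (Set.range ⇑WR' ∪
      ⋃ p : Σ v : {v : V // ∃ e, r e = v}, A' v, Set.range ⇑(W' p))).topologicalClosure = ⊤)
    (hintP' : ∀ (p : Σ v : {v : V // ∃ e, r e = v}, A' v) (w : V) (x),
      Q w (W' p x) = W' p (modelP s r p.1.1 w x))
    (hintS' : ∀ (p : Σ v : {v : V // ∃ e, r e = v}, A' v) (e : E) (x),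
      T e (W' p x) = W' p (modelS s r p.1.1 e x))
    (hintRP' : ∀ (w : V) (x : HR'), Q w (WR' x) = WR' (R' w x))
    (hintRS' : ∀ (e : E) (x : HR'), T e (WR' x) = WR' (L' e x)) :
    (∀ v : {v : V // ∃ e, r e = v}, Cardinal.mk (A v) = Cardinal.mk (A' v)) ∧
    ∃ U : HR ≃ₗᵢ[ℂ] HR',
      (∀ (w : V) (x : HR), U (R w x) = R' w (U x)) ∧
      (∀ (e : E) (x : HR), U (L e x) = L' e (U x)) := by
  classical
  -- the closed spans of the two families of shift summands
  set X := Submodule.span ℂ (⋃ p : Σ v : {v : V // ∃ e, r e = v}, A v, Set.range ⇑(W p))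
    with hXdef
  set X' := Submodule.span ℂ (⋃ p : Σ v : {v : V // ∃ e, r e = v}, A' v, Set.range ⇑(W' p))
    with hX'def
  -- products of the T e preserve the closed spans
  have hprod : ∀ (l : List E) (x : H),
      x ∈ X.topologicalClosure → ((l.map T).prod) x ∈ X.topologicalClosure := by
    intro l
    induction l with
    | nil => intro x hx; simpa using hx
    | cons e es ih =>
      intro x hx
      rw [List.map_cons, List.prod_cons, ContinuousLinearMap.mul_apply]
      exact D7_T_mem hintS e (ih x hx)
  have hprod' : ∀ (l : List E) (x : H),
      x ∈ X'.topologicalClosure → ((l.map T).prod) x ∈ X'.topologicalClosure := by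
    intro l
    induction l with
    | nil => intro x hx; simpa using hx
    | cons e es ih =>
      intro x hx
      rw [List.map_cons, List.prod_cons, ContinuousLinearMap.mul_apply]
      exact D7_T_mem hintS' e (ih x hx)
  -- the two closed spans agree
  have hle : ∀ {Y : Submodule ℂ H},
      (∀ q : Σ v : {v : V // ∃ e, r e = v}, A' v, ∀ u, W' q u ∈ Y.topologicalClosure) →
        X'.topologicalClosure ≤ Y.topologicalClosure := by
    intro Y hY
    apply Submodule.topologicalClosure_minimal
    · rw [Submodule.span_le]
      intro z hz
      obtain ⟨q, hq⟩ := Set.mem_iUnion.mp hz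
      obtain ⟨u0, rfl⟩ := hq
      exact hY q u0
    · exact Submodule.isClosed_topologicalClosure Y
  have hle1 : X'.topologicalClosure ≤ X.topologicalClosure := by
    refine hle fun q u => ?_
    refine mem_of_xi_mem (W' q) X.topologicalClosure
      (Submodule.isClosed_topologicalClosure X) (fun lam => ?_) u
    rw [W_xi_eq hintS' q lam.1.edges lam rfl]
    refine hprod _ _ ?_
    refine D4_wandering_le hQT hRLfull horth horthR htotal hintP hintS hintRP hintRS
      q.1.1 q.1.2 ?_
    exact D1_mem_wandering horth' horthR' htotal' hintP' hintS' hintRS' q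
  have hle2 : X.topologicalClosure ≤ X'.topologicalClosure := by
    have hle'' : ∀ {Y : Submodule ℂ H},
        (∀ q : Σ v : {v : V // ∃ e, r e = v}, A v, ∀ u, W q u ∈ Y.topologicalClosure) →
          X.topologicalClosure ≤ Y.topologicalClosure := by
      intro Y hY
      apply Submodule.topologicalClosure_minimal
      · rw [Submodule.span_le]
        intro z hz
        obtain ⟨q, hq⟩ := Set.mem_iUnion.mp hz
        obtain ⟨u0, rfl⟩ := hq
        exact hY q u0
      · exact Submodule.isClosed_topologicalClosure Y
    refine hle'' fun q u => ?_
    refine mem_of_xi_mem (W q) X'.topologicalClosure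
      (Submodule.isClosed_topologicalClosure X') (fun lam => ?_) u
    rw [W_xi_eq hintS q lam.1.edges lam rfl]
    refine hprod' _ _ ?_
    refine D4_wandering_le hQT hRLfull' horth' horthR' htotal' hintP' hintS' hintRP' hintRS'
      q.1.1 q.1.2 ?_
    exact D1_mem_wandering horth horthR htotal hintP hintS hintRS q
  have hXc : X.topologicalClosure = X'.topologicalClosure := le_antisymm hle2 hle1
  -- hence the orthogonal complements agree
  have horthXX : Xᗮ = X'ᗮ := by
    haveI c1 : CompleteSpace (Xᗮ : Submodule ℂ H) :=
      (Submodule.isClosed_orthogonal X).completeSpace_coe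
    haveI c2 : CompleteSpace (X'ᗮ : Submodule ℂ H) :=
      (Submodule.isClosed_orthogonal X').completeSpace_coe
    haveI p1 : Submodule.HasOrthogonalProjection (Xᗮ : Submodule ℂ H) :=
      Submodule.HasOrthogonalProjection.ofCompleteSpace _
    haveI p2 : Submodule.HasOrthogonalProjection (X'ᗮ : Submodule ℂ H) :=
      Submodule.HasOrthogonalProjection.ofCompleteSpace _
    have h1 : Xᗮᗮ = X'ᗮᗮ := by
      rw [Submodule.orthogonal_orthogonal_eq_closure, Submodule.orthogonal_orthogonal_eq_closure,
        hXc]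
    calc Xᗮ = Xᗮᗮᗮ := (Submodule.orthogonal_orthogonal Xᗮ).symm
      _ = X'ᗮᗮᗮ := by rw [h1]
      _ = X'ᗮ := Submodule.orthogonal_orthogonal X'ᗮ
  have hMM : LinearMap.range WR.toLinearMap = LinearMap.range WR'.toLinearMap := by
    rw [← D6_range_eq horthR htotal, ← D6_range_eq horthR' htotal', horthXX]
  -- construct the unitary between the full CK parts
  let e1 : HR ≃ₗ[ℂ] LinearMap.range WR.toLinearMap :=
    LinearEquiv.ofInjective WR.toLinearMap WR.injective
  let e2 : HR' ≃ₗ[ℂ] LinearMap.range WR'.toLinearMap :=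
    LinearEquiv.ofInjective WR'.toLinearMap WR'.injective
  let e3 := LinearEquiv.ofEq _ _ hMM
  let U0 : HR ≃ₗ[ℂ] HR' := (e1.trans e3).trans e2.symm
  have hU0 : ∀ x : HR, WR' (U0 x) = WR x := by
    intro x
    have h4 : (WR'.toLinearMap : HR' → H) (e2.symm (e3 (e1 x))) = ↑(e2 (e2.symm (e3 (e1 x)))) :=
      (LinearEquiv.ofInjective_apply WR'.toLinearMap _).symm
    show (WR' : HR' → H) (e2.symm (e3 (e1 x))) = WR x
    rw [show ((WR' : HR' → H) (e2.symm (e3 (e1 x)))) =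
        (WR'.toLinearMap : HR' → H) (e2.symm (e3 (e1 x))) from rfl, h4,
      LinearEquiv.apply_symm_apply, LinearEquiv.coe_ofEq_apply,
      LinearEquiv.ofInjective_apply]
    rfl
  let U : HR ≃ₗᵢ[ℂ] HR' := ⟨U0, fun x => by
    calc ‖U0 x‖ = ‖WR' (U0 x)‖ := (WR'.norm_map _).symm
      _ = ‖WR x‖ := by rw [hU0 x]
      _ = ‖x‖ := WR.norm_map x⟩
  have hUapp : ∀ x : HR, WR' (U x) = WR x := hU0
  constructor
  · -- equality of multiplicities
    rintro ⟨v, hv⟩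
    have hb := D2_orthonormal horth v hv
    have hb' := D2_orthonormal horth' v hv
    have hFb : ∀ a : A ⟨v, hv⟩,
        W ⟨⟨v, hv⟩, a⟩ (xi (nilS s r v)) ∈ wandering s r Q T v :=
      fun a => D1_mem_wandering horth horthR htotal hintP hintS hintRS ⟨⟨v, hv⟩, a⟩
    have hFb' : ∀ a : A' ⟨v, hv⟩,
        W' ⟨⟨v, hv⟩, a⟩ (xi (nilS s r v)) ∈ wandering s r Q T v :=
      fun a => D1_mem_wandering horth' horthR' htotal' hintP' hintS' hintRS' ⟨⟨v, hv⟩, a⟩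
    have hmaxb : ∀ x ∈ wandering s r Q T v,
        (∀ a : A ⟨v, hv⟩, (inner ℂ (W ⟨⟨v, hv⟩, a⟩ (xi (nilS s r v))) x : ℂ) = 0) → x = 0 :=
      fun x hx hz => D3_max hQT hRLfull horth horthR htotal hintP hintS hintRP hintRS
        v hv x hx hz
    have hmaxb' : ∀ x ∈ wandering s r Q T v,
        (∀ a : A' ⟨v, hv⟩, (inner ℂ (W' ⟨⟨v, hv⟩, a⟩ (xi (nilS s r v))) x : ℂ) = 0) → x = 0 :=
      fun x hx hz => D3_max hQT hRLfull' horth' horthR' htotal' hintP' hintS' hintRP' hintRS'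
        v hv x hx hz
    exact le_antisymm
      (onb_card_le (wandering s r Q T v) _ _ hb hb' hFb hFb' hmaxb')
      (onb_card_le (wandering s r Q T v) _ _ hb' hb hFb' hFb hmaxb)
  · refine ⟨U, ?_, ?_⟩
    · intro w x
      apply WR'.injective
      calc WR' (U (R w x)) = WR (R w x) := hUapp _
        _ = Q w (WR x) := (hintRP w x).symm
        _ = Q w (WR' (U x)) := by rw [hUapp x]
        _ = WR' (R' w (U x)) := hintRP' w (U x)
    · intro e x
      apply WR'.injective
      calc WR' (U (L e x)) = WR (L e x) := hUapp _
        _ = T e (WR x) := (hintRS e x).symm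
        _ = T e (WR' (U x)) := by rw [hUapp x]
        _ = WR' (L' e (U x)) := hintRS' e (U x)


end GraphPaper
end
end

section
/- Let G = (V, E, s, r) be a countable directed graph and let (Q, T) be a TCK family for G on a nonzero complex Hilbert space H which is irreducible: the only closed subspaces of H invariant under every Q_v, T_e and their adjoints are {0} and H. Suppose v ∈ V satisfies r⁻¹(v) ≠ ∅ and there exists a nonzero vector ζ ∈ H with Q_v ζ = ζ and T_e* ζ = 0 for every e ∈ r⁻¹(v) (i.e., v is a singular vertex for (Q, T)). Then (Q, T) is unitarily equivalent to the model TCK family (P^v, S^v) on H_{G,v}. -/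
noncomputable section

open scoped ENNReal InnerProductSpace ComplexOrder
open ContinuousLinearMap

attribute [local instance] Classical.propDecidable

namespace GraphPaper


/-! ### Auxiliary lemmas for Statement 10 -/

section Stmt10Aux

variable {V E : Type*} {H : Type*} [NormedAddCommGroup H] [InnerProductSpace ℂ H]
  [CompleteSpace H] {s r : E → V} {Q : V → H →L[ℂ] H} {T : E → H →L[ℂ] H}

theorem inner_self_nonpos_c {W : Type*} [NormedAddCommGroup W] [InnerProductSpace ℂ W]
    {x : W} (hx : (inner ℂ x x : ℂ) ≤ 0) : x = 0 := by
  rw [inner_self_eq_norm_sq_to_K] at hx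
  have h2 : ((‖x‖ ^ 2 : ℝ) : ℂ) ≤ ((0 : ℝ) : ℂ) := by push_cast; simpa using hx
  rw [Complex.real_le_real] at h2
  have h0 : ‖x‖ = 0 := by nlinarith [norm_nonneg x]
  exact norm_eq_zero.mp h0

theorem tck_TstarT (h : IsTCK s r Q T) (e : E) (x : H) :
    adjoint (T e) (T e x) = Q (s e) x :=
  ContinuousLinearMap.ext_iff.mp (h.2.2.2.1 e) x

theorem tck_QQ (h : IsTCK s r Q T) (w : V) (x : H) : Q w (Q w x) = Q w x :=
  ContinuousLinearMap.ext_iff.mp (h.2.1 w) x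

theorem tck_QQ' (h : IsTCK s r Q T) {w w' : V} (hw : w ≠ w') (x : H) :
    Q w (Q w' x) = 0 :=
  ContinuousLinearMap.ext_iff.mp (h.2.2.1 w w' hw) x

/-- `T e` kills the kernel of `Q (s e)`. -/
theorem tck_T_ker (h : IsTCK s r Q T) (e : E) {y : H} (hy : Q (s e) y = 0) :
    T e y = 0 := by
  have : (inner ℂ (T e y) (T e y) : ℂ) = 0 := by
    rw [← ContinuousLinearMap.adjoint_inner_right, tck_TstarT h, hy, inner_zero_right]
  exact inner_self_eq_zero.mp this

theorem tck_T_Q (h : IsTCK s r Q T) (e : E) (x : H) : T e (Q (s e) x) = T e x := by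
  have h0 : T e x - T e (Q (s e) x) = 0 := by
    rw [← map_sub]
    exact tck_T_ker h e (by rw [map_sub, tck_QQ h, sub_self])
  exact (sub_eq_zero.mp h0).symm

/-- `adjoint (T e)` kills the kernel of `Q (r e)`. -/
theorem tck_Tstar_ker (h : IsTCK s r Q T) (e : E) {y : H} (hy : Q (r e) y = 0) :
    adjoint (T e) y = 0 := by
  have hpos := h.2.2.2.2 (r e) {e} (by simp) y
  have hexp : (inner ℂ ((Q (r e) - ∑ f ∈ ({e} : Finset E), T f ∘L adjoint (T f)) y) y : ℂ)
      = - inner ℂ (adjoint (T e) y) (adjoint (T e) y) := by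
    rw [Finset.sum_singleton, ContinuousLinearMap.sub_apply, inner_sub_left, hy,
      inner_zero_left, zero_sub, ContinuousLinearMap.comp_apply,
      ← ContinuousLinearMap.adjoint_inner_right]
  rw [hexp] at hpos
  exact inner_self_nonpos_c (neg_nonneg.mp hpos)

theorem tck_Q_T (h : IsTCK s r Q T) (e : E) (x : H) : Q (r e) (T e x) = T e x := by
  have hop : adjoint (T e) = adjoint (T e) ∘L Q (r e) := by
    ext y
    have h0 : adjoint (T e) y - adjoint (T e) (Q (r e) y) = 0 := by
      rw [← map_sub]
      exact tck_Tstar_ker h e (by rw [map_sub, tck_QQ h, sub_self])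
    exact (sub_eq_zero.mp h0)
  have hT : T e = Q (r e) ∘L T e := by
    calc T e = adjoint (adjoint (T e)) := (adjoint_adjoint _).symm
      _ = adjoint (adjoint (T e) ∘L Q (r e)) := by rw [← hop]
      _ = adjoint (Q (r e)) ∘L adjoint (adjoint (T e)) := adjoint_comp _ _
      _ = Q (r e) ∘L T e := by rw [h.1, adjoint_adjoint]
  exact (ContinuousLinearMap.ext_iff.mp hT x).symm

/-- Projection identity for inner ℂ products: `⟪Q x, Q x⟫ = ⟪x, Q x⟫`. -/
theorem tck_inner_Q (h : IsTCK s r Q T) (w : V) (x : H) :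
    (inner ℂ (Q w x) (Q w x) : ℂ) = inner ℂ x (Q w x) := by
  calc (inner ℂ (Q w x) (Q w x) : ℂ) = inner ℂ (adjoint (Q w) x) (Q w x) := by rw [h.1 w]
    _ = inner ℂ x (Q w (Q w x)) := ContinuousLinearMap.adjoint_inner_left (Q w) (Q w x) x
    _ = inner ℂ x (Q w x) := by rw [tck_QQ h]

theorem tck_TstarT' (h : IsTCK s r Q T) {e f : E} (hef : e ≠ f) (x : H) :
    adjoint (T e) (T f x) = 0 := by
  by_cases hr : r e = r f
  · set y := T f x with hy
    have hpos := h.2.2.2.2 (r e) {e, f}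
      (by
        intro g hg
        rcases Finset.mem_insert.mp hg with h1 | h1
        · rw [h1]
        · rw [Finset.mem_singleton.mp h1, hr]) y
    have hsum : (∑ g ∈ ({e, f} : Finset E), T g ∘L adjoint (T g)) y
        = T e (adjoint (T e) y) + T f (adjoint (T f) y) := by
      rw [Finset.sum_pair hef]; rfl
    have hQy : Q (r e) y = y := by rw [hy, hr]; exact tck_Q_T h f x
    have hexp : (inner ℂ ((Q (r e) - ∑ g ∈ ({e, f} : Finset E), T g ∘L adjoint (T g)) y) y : ℂ)
        = - inner ℂ (adjoint (T e) y) (adjoint (T e) y) := by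
      rw [ContinuousLinearMap.sub_apply, hsum, inner_sub_left, inner_add_left, hQy]
      have e1 : (inner ℂ (T e (adjoint (T e) y)) y : ℂ)
          = inner ℂ (adjoint (T e) y) (adjoint (T e) y) := by
        rw [← ContinuousLinearMap.adjoint_inner_right]
      have e2 : (inner ℂ (T f (adjoint (T f) y)) y : ℂ)
          = inner ℂ (adjoint (T f) y) (adjoint (T f) y) := by
        rw [← ContinuousLinearMap.adjoint_inner_right]
      have e3 : (inner ℂ y y : ℂ) = inner ℂ (adjoint (T f) y) (adjoint (T f) y) := by
        have hTf : adjoint (T f) y = Q (s f) x := by rw [hy]; exact tck_TstarT h f x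
        rw [hTf, tck_inner_Q h, hy, ← tck_TstarT h f x]
        exact (ContinuousLinearMap.adjoint_inner_right (T f) x (T f x)).symm
      rw [e1, e2, ← e3]
      ring
    rw [hexp] at hpos
    exact inner_self_nonpos_c (neg_nonneg.mp hpos)
  · apply tck_Tstar_ker h e
    rw [← tck_Q_T h f x]
    exact tck_QQ' h hr _

end Stmt10Aux


section Stmt10Paths

variable {V E : Type*} {H : Type*} [NormedAddCommGroup H] [InnerProductSpace ℂ H]
  [CompleteSpace H] {s r : E → V} {Q : V → H →L[ℂ] H} {T : E → H →L[ℂ] H} {v : V} {ζ : H}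

/-- The iterated application `T_{e_n} ⋯ T_{e_1} ζ`. -/
def vecL (T : E → H →L[ℂ] H) (ζ : H) : List E → H
  | [] => ζ
  | e :: l => T e (vecL T ζ l)

@[simp] theorem vecL_nil : vecL T ζ [] = ζ := rfl

@[simp] theorem vecL_cons (e : E) (l : List E) : vecL T ζ (e :: l) = T e (vecL T ζ l) := rfl

/-- Valid path lists with source `v`. -/
def okL (s r : E → V) (v : V) (l : List E) : Prop :=
  l.Chain' (fun e f => s e = r f) ∧ ∀ e ∈ l.getLast?, s e = v

/-- The range of a path list. -/
def rngL (r : E → V) (v : V) : List E → V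
  | [] => v
  | e :: _ => r e

theorem okL_nil : okL s r v [] := ⟨List.isChain_nil, by simp⟩

theorem okL_cons {e : E} {l : List E} (h : okL s r v (e :: l)) :
    okL s r v l ∧ s e = rngL r v l := by
  obtain ⟨hc, hlast⟩ := h
  replace hc := List.isChain_cons.mp hc
  cases l with
  | nil =>
    refine ⟨okL_nil, ?_⟩
    exact hlast e (by simp)
  | cons f l' =>
    refine ⟨⟨hc.2, ?_⟩, hc.1 f (by simp)⟩
    intro g hg
    exact hlast g (by rw [List.getLast?_cons_cons]; exact hg)

theorem okL_cons' {e : E} {l : List E} (h : okL s r v l) (he : s e = rngL r v l) :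
    okL s r v (e :: l) := by
  obtain ⟨hc, hlast⟩ := h
  cases l with
  | nil => exact ⟨List.isChain_singleton _, by simpa [rngL] using he⟩
  | cons f l' =>
    refine ⟨List.isChain_cons.mpr ⟨by simpa [rngL] using he, hc⟩, ?_⟩
    intro g hg
    exact hlast g (by rw [List.getLast?_cons_cons] at hg; exact hg)

theorem okL_spath (p : SPath s r v) : okL s r v p.1.edges :=
  ⟨p.1.chain, fun e he => (p.1.src_eq e he).trans p.2⟩

theorem spath_rng (p : SPath s r v) : p.1.rng = rngL r v p.1.edges := by
  rcases hp : p.1.edges with - | ⟨e, l⟩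
  · simp [GPath.rng, rngL, hp, p.2]
  · simp [GPath.rng, rngL, hp]

/-- Build a source-`v` path from a valid list. -/
def ofOk (s r : E → V) (v : V) (l : List E) (hl : okL s r v l) : SPath s r v :=
  ⟨⟨v, l, hl.1, hl.2⟩, rfl⟩

@[simp] theorem ofOk_edges (l : List E) (hl : okL s r v l) :
    (ofOk s r v l hl).1.edges = l := rfl

/-- All adjoints kill a wandering vector. -/
theorem wander_all (h : IsTCK s r Q T) (hz1 : Q v ζ = ζ)
    (hz2 : ∀ e : E, r e = v → adjoint (T e) ζ = 0) (e : E) : adjoint (T e) ζ = 0 := by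
  by_cases hre : r e = v
  · exact hz2 e hre
  · exact tck_Tstar_ker h e (by rw [← hz1]; exact tck_QQ' h hre ζ)

theorem vecL_Q (h : IsTCK s r Q T) (hz1 : Q v ζ = ζ) (l : List E) :
    Q (rngL r v l) (vecL T ζ l) = vecL T ζ l := by
  cases l with
  | nil => exact hz1
  | cons e l => exact tck_Q_T h e _

theorem vecL_Q' (h : IsTCK s r Q T) (hz1 : Q v ζ = ζ) {w : V} {l : List E}
    (hw : w ≠ rngL r v l) : Q w (vecL T ζ l) = 0 := by
  rw [← vecL_Q h hz1 l]
  exact tck_QQ' h hw _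

theorem vecL_T_ne (h : IsTCK s r Q T) (hz1 : Q v ζ = ζ) {e : E} {l : List E}
    (he : s e ≠ rngL r v l) : T e (vecL T ζ l) = 0 :=
  tck_T_ker h e (vecL_Q' h hz1 he)

theorem vecL_Tstar_cons (h : IsTCK s r Q T) (hz1 : Q v ζ = ζ) {e : E} {l : List E}
    (hl : okL s r v (e :: l)) : adjoint (T e) (vecL T ζ (e :: l)) = vecL T ζ l := by
  rw [vecL_cons, tck_TstarT h, (okL_cons hl).2]
  exact vecL_Q h hz1 l

theorem vecL_inner (h : IsTCK s r Q T) (hz1 : Q v ζ = ζ)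
    (hz2 : ∀ e : E, adjoint (T e) ζ = 0) (hn : ‖ζ‖ = 1) :
    ∀ l1 l2 : List E, okL s r v l1 → okL s r v l2 →
      (inner ℂ (vecL T ζ l1) (vecL T ζ l2) : ℂ) = if l1 = l2 then 1 else 0 := by
  intro l1
  induction l1 with
  | nil =>
    intro l2 _ h2
    cases l2 with
    | nil => simp [inner_self_eq_norm_sq_to_K, hn]
    | cons f l2' =>
      rw [if_neg (by simp), vecL_nil, vecL_cons,
        ← ContinuousLinearMap.adjoint_inner_left (T f) (vecL T ζ l2') ζ, hz2 f,
        inner_zero_left]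
  | cons e l1' ih =>
    intro l2 h1 h2
    cases l2 with
    | nil =>
      rw [if_neg (by simp), vecL_nil, vecL_cons,
        ← ContinuousLinearMap.adjoint_inner_right (T e) (vecL T ζ l1') ζ, hz2 e,
        inner_zero_right]
    | cons f l2' =>
      rw [vecL_cons, vecL_cons,
        ← ContinuousLinearMap.adjoint_inner_right (T e) (vecL T ζ l1') (T f (vecL T ζ l2'))]
      by_cases hef : e = f
      · subst hef
        rw [← vecL_cons, vecL_Tstar_cons h hz1 h2, ih l2' (okL_cons h1).1 (okL_cons h2).1]
        by_cases hl : l1' = l2' <;> simp [hl]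
      · rw [tck_TstarT' h hef, inner_zero_right, if_neg (by simp [hef])]

/-- Invariance of the closure of an invariant span. -/
theorem span_closure_invariant {ι : Type*} {g : ι → H} {A : H →L[ℂ] H}
    (hA : ∀ i, A (g i) ∈ Submodule.span ℂ (Set.range g)) :
    ∀ x ∈ (Submodule.span ℂ (Set.range g)).topologicalClosure,
      A x ∈ (Submodule.span ℂ (Set.range g)).topologicalClosure := by
  set S := Submodule.span ℂ (Set.range g) with hS
  have hspan : ∀ y ∈ S, A y ∈ S := by
    intro y hy
    induction hy using Submodule.span_induction with
    | mem x hx => obtain ⟨i, rfl⟩ := hx; exact hA i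
    | zero => rw [map_zero]; exact S.zero_mem
    | add x y _ _ hx hy => rw [map_add]; exact S.add_mem hx hy
    | smul a x _ hx => rw [map_smul]; exact S.smul_mem a hx
  intro x hx
  have hx' : x ∈ closure (S : Set H) := by
    rw [← Submodule.topologicalClosure_coe]; exact hx
  have h1 : A x ∈ A '' closure (S : Set H) := Set.mem_image_of_mem _ hx'
  have h2 : A '' closure (S : Set H) ⊆ closure (A '' (S : Set H)) :=
    image_closure_subset_closure_image A.continuous
  have h3 : closure (A '' (S : Set H)) ⊆ closure (S : Set H) := by
    apply closure_mono
    rintro - ⟨y, hy, rfl⟩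
    exact hspan y hy
  show A x ∈ (S.topologicalClosure : Set H)
  rw [Submodule.topologicalClosure_coe]
  exact h3 (h2 h1)

/-- Action of the model projection on a basis vector. -/
theorem modelP_single (s r : E → V) (v w : V) (p : SPath s r v) :
    modelP s r v w (lp.single 2 p 1) =
      if p.1.rng = w then lp.single 2 p 1 else 0 := by
  by_cases hw : p.1.rng = w
  · rw [if_pos hw]
    apply lp.ext
    funext k
    show pullFun (decodeP v w) (⇑(lp.single 2 p 1)) k = (lp.single (E := fun _ : SPath s r v => ℂ) 2 p 1) k
    unfold pullFun decodeP
    by_cases hk : k.1.rng = w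
    · rw [if_pos hk]; simp
    · rw [if_neg hk]
      have hkp : k ≠ p := fun hkp => hk (hkp ▸ hw)
      simp [lp.single_apply, hkp]
  · rw [if_neg hw]
    apply lp.ext
    funext k
    show pullFun (decodeP v w) (⇑(lp.single 2 p 1)) k = (0 : HGv s r v) k
    unfold pullFun decodeP
    by_cases hk : k.1.rng = w
    · rw [if_pos hk]
      have hkp : k ≠ p := fun hkp => hw (hkp ▸ hk)
      simp [lp.single_apply, hkp]
    · rw [if_neg hk]; simp

/-- Action of the model shift on a basis vector: creation case. -/
theorem modelS_single_of (s r : E → V) (v : V) (e : E) (p : SPath s r v)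
    (hok : okL s r v (e :: p.1.edges)) :
    modelS s r v e (lp.single 2 p 1) = lp.single 2 (ofOk s r v (e :: p.1.edges) hok) 1 := by
  set c : SPath s r v := ofOk s r v (e :: p.1.edges) hok with hc
  apply lp.ext
  funext k
  show pullFun (decodeS v e) (⇑(lp.single 2 p 1)) k = (lp.single (E := fun _ : SPath s r v => ℂ) 2 c 1) k
  unfold pullFun decodeS
  by_cases hk : k = c
  · have hhead : k.1.edges.head? = some e := by rw [hk]; rfl
    rw [if_pos hhead]
    have htail : (⟨k.1.tail, k.2⟩ : SPath s r v) = p := by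
      apply Subtype.ext
      apply GPath.ext'
      · exact k.2.trans p.2.symm
      · show k.1.edges.tail = p.1.edges
        rw [hk]
        rfl
    rw [htail, hk]
    simp [lp.single_apply]
  · by_cases hh : k.1.edges.head? = some e
    · rw [if_pos hh]
      have hne : (⟨k.1.tail, k.2⟩ : SPath s r v) ≠ p := by
        intro hp
        apply hk
        obtain ⟨t, ht⟩ := List.head?_eq_some_iff.mp hh
        have htedge : k.1.tail.edges = p.1.edges := congrArg (fun q : SPath s r v => q.1.edges) hp
        have ht' : k.1.tail.edges = t := by
          show k.1.edges.tail = t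
          rw [ht, List.tail_cons]
        apply Subtype.ext
        apply GPath.ext'
        · exact k.2.trans c.2.symm
        · show k.1.edges = c.1.edges
          rw [ht, hc]
          rw [ht'] at htedge
          rw [htedge]
          rfl
      simp [lp.single_apply, hne, hk]
    · rw [if_neg hh]
      simp [lp.single_apply, hk]

/-- Action of the model shift on a basis vector: annihilation case. -/
theorem modelS_single_ne (s r : E → V) (v : V) (e : E) (p : SPath s r v)
    (he : s e ≠ rngL r v p.1.edges) :
    modelS s r v e (lp.single 2 p 1) = 0 := by
  apply lp.ext
  funext k
  show pullFun (decodeS v e) (⇑(lp.single 2 p 1)) k = (0 : HGv s r v) k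
  unfold pullFun decodeS
  by_cases hh : k.1.edges.head? = some e
  · rw [if_pos hh]
    have hne : (⟨k.1.tail, k.2⟩ : SPath s r v) ≠ p := by
      intro hp
      apply he
      obtain ⟨t, ht⟩ := List.head?_eq_some_iff.mp hh
      have hok : okL s r v k.1.edges := okL_spath k
      rw [ht] at hok
      have hse := (okL_cons hok).2
      have htedge : k.1.tail.edges = p.1.edges := congrArg (fun q : SPath s r v => q.1.edges) hp
      have ht' : k.1.tail.edges = t := by
        show k.1.edges.tail = t
        rw [ht, List.tail_cons]
      rw [ht'] at htedge
      rw [← htedge]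
      exact hse
    simp [lp.single_apply, hne]
  · rw [if_neg hh]
    simp

end Stmt10Paths

set_option maxHeartbeats 1000000 in
set_option synthInstance.maxHeartbeats 1000000 in
/-- An irreducible TCK family on a nonzero Hilbert space admitting a
nonzero wandering vector at a vertex `v` with `r⁻¹(v) ≠ ∅` is unitarily equivalent to
the model TCK family `(P^v, S^v)` on `H_{G,v}`. -/
theorem statement_10 {V E : Type*} [Countable V] [Countable E]
    {H : Type*} [NormedAddCommGroup H] [InnerProductSpace ℂ H] [CompleteSpace H]
    [Nontrivial H]
    (s r : E → V) (Q : V → H →L[ℂ] H) (T : E → H →L[ℂ] H) (hQT : IsTCK s r Q T)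
    (hirr : ∀ M : Submodule ℂ H, IsClosed (M : Set H) → Reduces Q T M → M = ⊥ ∨ M = ⊤)
    (v : V) (hv : ∃ e, r e = v) (ζ : H) (hζ : ζ ≠ 0)
    (hζ1 : Q v ζ = ζ) (hζ2 : ∀ e : E, r e = v → ContinuousLinearMap.adjoint (T e) ζ = 0) :
    ∃ U : H ≃ₗᵢ[ℂ] HGv s r v,
      (∀ (w : V) (x : H), U (Q w x) = modelP s r v w (U x)) ∧
      (∀ (e : E) (x : H), U (T e x) = modelS s r v e (U x)) := by
  classical
  -- Normalize the wandering vector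
  set ζ0 : H := (‖ζ‖⁻¹ : ℂ) • ζ with hζ0
  have hnz : ‖ζ‖ ≠ 0 := norm_ne_zero_iff.mpr hζ
  have hn : ‖ζ0‖ = 1 := by
    rw [hζ0, norm_smul, norm_inv, Complex.norm_real, Real.norm_eq_abs,
      abs_of_nonneg (norm_nonneg ζ)]
    exact inv_mul_cancel₀ hnz
  have h01 : Q v ζ0 = ζ0 := by rw [hζ0, map_smul, hζ1]
  have h02 : ∀ e : E, adjoint (T e) ζ0 = 0 :=
    wander_all hQT h01 (fun e he => by rw [hζ0, map_smul, hζ2 e he, smul_zero])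
  -- The orthonormal family of path vectors
  have hfam0 : True := trivial
  set fam : SPath s r v → H := fun p => vecL T ζ0 p.1.edges with hfamdef
  have hfam : ∀ p : SPath s r v, fam p = vecL T ζ0 p.1.edges := fun _ => rfl
  have hon : Orthonormal ℂ fam := by
    rw [orthonormal_iff_ite]
    intro p q
    rw [hfam p, hfam q, vecL_inner hQT h01 h02 hn _ _ (okL_spath p) (okL_spath q)]
    by_cases hpq : p = q
    · rw [if_pos hpq, if_pos (by rw [hpq])]
    · rw [if_neg hpq,
        if_neg (fun hE => hpq (Subtype.ext (GPath.ext' (p.2.trans q.2.symm) hE)))]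
  -- invariance of the span under the generators
  have hQmem : ∀ (w : V) (p : SPath s r v),
      Q w (fam p) ∈ Submodule.span ℂ (Set.range fam) := by
    intro w p
    by_cases hw : w = rngL r v p.1.edges
    · have : Q w (fam p) = fam p := by rw [hfam p, hw]; exact vecL_Q hQT h01 _
      rw [this]
      exact Submodule.subset_span ⟨p, rfl⟩
    · have : Q w (fam p) = 0 := by rw [hfam p]; exact vecL_Q' hQT h01 hw
      rw [this]
      exact Submodule.zero_mem _
  have hTmem : ∀ (e : E) (p : SPath s r v),
      T e (fam p) ∈ Submodule.span ℂ (Set.range fam) := by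
    intro e p
    by_cases he : s e = rngL r v p.1.edges
    · have hok := okL_cons' (okL_spath p) he
      have : T e (fam p) = fam (ofOk s r v (e :: p.1.edges) hok) := rfl
      rw [this]
      exact Submodule.subset_span ⟨_, rfl⟩
    · have : T e (fam p) = 0 := by rw [hfam p]; exact vecL_T_ne hQT h01 he
      rw [this]
      exact Submodule.zero_mem _
  have hTstarmem : ∀ (e : E) (p : SPath s r v),
      adjoint (T e) (fam p) ∈ Submodule.span ℂ (Set.range fam) := by
    intro e p
    rcases hp : p.1.edges with - | ⟨f, l⟩
    · have : adjoint (T e) (fam p) = 0 := by rw [hfam p, hp, vecL_nil]; exact h02 e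
      rw [this]
      exact Submodule.zero_mem _
    · by_cases hef : e = f
      · subst hef
        have hok : okL s r v (e :: l) := by rw [← hp]; exact okL_spath p
        have : adjoint (T e) (fam p) = vecL T ζ0 l := by
          rw [hfam p, hp]; exact vecL_Tstar_cons hQT h01 hok
        rw [this]
        exact Submodule.subset_span ⟨ofOk s r v l (okL_cons hok).1, rfl⟩
      · have : adjoint (T e) (fam p) = 0 := by
          rw [hfam p, hp, vecL_cons]; exact tck_TstarT' hQT hef _
        rw [this]
        exact Submodule.zero_mem _
  -- the closed span is reducing, hence everything
  have hred : Reduces Q T (Submodule.span ℂ (Set.range fam)).topologicalClosure := by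
    constructor
    · intro w x hx
      refine ⟨span_closure_invariant (hQmem w) x hx, ?_⟩
      rw [hQT.1 w]
      exact span_closure_invariant (hQmem w) x hx
    · intro e x hx
      exact ⟨span_closure_invariant (hTmem e) x hx,
        span_closure_invariant (hTstarmem e) x hx⟩
  have hMtop : (Submodule.span ℂ (Set.range fam)).topologicalClosure = ⊤ := by
    rcases hirr _ (Submodule.isClosed_topologicalClosure _) hred with hbot | htop
    · exfalso
      have hz0 : ζ0 ∈ (Submodule.span ℂ (Set.range fam)).topologicalClosure :=
        Submodule.le_topologicalClosure _
          (Submodule.subset_span ⟨ofOk s r v [] okL_nil, rfl⟩)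
      rw [hbot, Submodule.mem_bot] at hz0
      rw [hz0, norm_zero] at hn
      exact zero_ne_one hn
    · exact htop
  have hsp : ⊤ ≤ (Submodule.span ℂ (Set.range fam)).topologicalClosure := hMtop.ge
  have hdense : Dense ((Submodule.span ℂ (Set.range fam)) : Set H) :=
    Submodule.dense_iff_topologicalClosure_eq_top.mpr hMtop
  set b : HilbertBasis (SPath s r v) ℂ H := HilbertBasis.mk hon hsp with hb
  have hU : ∀ p : SPath s r v, b.repr (fam p) = lp.single 2 p 1 := by
    intro p
    have h2 : ⇑b = fam := by rw [hb]; exact HilbertBasis.coe_mk hon hsp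
    rw [← congrFun h2 p]
    exact HilbertBasis.repr_self b p
  set Ucl : H →L[ℂ] HGv s r v := b.repr.toLinearIsometry.toContinuousLinearMap with hUcl
  have hUcl' : ∀ x : H, Ucl x = b.repr x := fun _ => rfl
  refine ⟨b.repr, ?_, ?_⟩
  · intro w x
    have hQw : (modelP s r v w) ∘L Ucl = Ucl ∘L (Q w) := by
      apply ContinuousLinearMap.ext_on hdense
      rintro - ⟨p, rfl⟩
      show modelP s r v w (Ucl (fam p)) = Ucl (Q w (fam p))
      rw [hUcl' (fam p), hU p, modelP_single]
      by_cases hw : w = rngL r v p.1.edges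
      · rw [if_pos (by rw [spath_rng]; exact hw.symm)]
        have h1 : Q w (fam p) = fam p := by rw [hfam p, hw]; exact vecL_Q hQT h01 _
        rw [h1, hUcl' (fam p), hU p]
      · rw [if_neg (fun hr' => hw (by rw [spath_rng p] at hr'; exact hr'.symm))]
        have h1 : Q w (fam p) = 0 := by rw [hfam p]; exact vecL_Q' hQT h01 hw
        rw [h1, map_zero]
    have := ContinuousLinearMap.ext_iff.mp hQw x
    rw [ContinuousLinearMap.comp_apply, ContinuousLinearMap.comp_apply] at this
    rw [hUcl' x, hUcl' (Q w x)] at this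
    exact this.symm
  · intro e x
    have hTe : (modelS s r v e) ∘L Ucl = Ucl ∘L (T e) := by
      apply ContinuousLinearMap.ext_on hdense
      rintro - ⟨p, rfl⟩
      show modelS s r v e (Ucl (fam p)) = Ucl (T e (fam p))
      rw [hUcl' (fam p), hU p]
      by_cases he : s e = rngL r v p.1.edges
      · have hok := okL_cons' (okL_spath p) he
        rw [modelS_single_of s r v e p hok]
        have h1 : T e (fam p) = fam (ofOk s r v (e :: p.1.edges) hok) := rfl
        rw [h1, hUcl', hU]
      · rw [modelS_single_ne s r v e p he]
        have h1 : T e (fam p) = 0 := by rw [hfam p]; exact vecL_T_ne hQT h01 he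
        rw [h1, map_zero]
    have := ContinuousLinearMap.ext_iff.mp hTe x
    rw [ContinuousLinearMap.comp_apply, ContinuousLinearMap.comp_apply] at this
    rw [hUcl' x, hUcl' (T e x)] at this
    exact this.symm


end GraphPaper
end
end
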